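/- Let g ≥ 1 and d ≥ 1 be integers, and write d − 1 = m·g + ε with m = ⌊(d−1)/g⌋ and 0 ≤ ε < g. Let β : ℕ → ℤ be a sequence satisfying β(1) = 1 and β(l) − β(l−1) ≥ min{ d, (l−1)·g + 1 } for every l ≥ 2. Suppose γ is an integer such that for some integer k ≥ 0 one has β(m + 1 + k) ≤ (m + 1 + k)·d − γ + 1. Then γ ≤ C(m+1, 2)·g + (m+1)·ε + 1, where C(m+1, 2) = m(m+1)/2 is the binomial coefficient. -/
import Mathlib


/-- Numerical skeleton of Theorem B (the Castelnuovo-type genus bound).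
Write `d - 1 = m * g + ε` with `0 ≤ ε < g`. If `β 1 = 1`,
`β l - β (l-1) ≥ min d ((l-1) * g + 1)` for all `l ≥ 2`, and for some `k ≥ 0` one has
`β (m + 1 + k) ≤ (m + 1 + k) * d - γ + 1`, then
`γ ≤ C(m+1, 2) * g + (m+1) * ε + 1`. -/
theorem stmt6 (g d m ε : ℕ) (hg : 1 ≤ g) (hd : 1 ≤ d)
    (hm : m = (d - 1) / g) (hε : ε < g) (hdec : d - 1 = m * g + ε)
    (β : ℕ → ℤ)
    (hβ1 : β 1 = 1)
    (hβ : ∀ l : ℕ, 2 ≤ l → β l - β (l - 1) ≥ min (d : ℤ) (((l : ℤ) - 1) * g + 1))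
    (γ : ℤ)
    (hγ : ∃ k : ℕ, β (m + 1 + k) ≤ ((m : ℤ) + 1 + k) * d - γ + 1) :
    γ ≤ ((m + 1).choose 2 : ℤ) * g + (m + 1) * ε + 1 := by
  -- d = m*g + ε + 1 over ℤ
  have hdZ : (d : ℤ) = m * g + ε + 1 := by
    have : d = m * g + ε + 1 := by omega
    rw [this]; push_cast; ring
  -- Claim A
  have claimA : ∀ j : ℕ, j ≤ m → 2 * β (j + 1) ≥ 2 + (g : ℤ) * j * (j + 1) + 2 * j := by
    intro j
    induction j with
    | zero => intro _; simp [hβ1]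
    | succ j ih =>
      intro hjm
      have ihh := ih (by omega)
      have hstep := hβ (j + 2) (by omega)
      have hlow : ((j : ℤ) + 1) * g + 1 ≤ (d : ℤ) := by
        rw [hdZ]
        have : (j : ℤ) + 1 ≤ m := by exact_mod_cast (by omega : j + 1 ≤ m)
        nlinarith [Int.natCast_nonneg g, Int.natCast_nonneg ε]
      have hmin' : min (d : ℤ) ((((j + 2 : ℕ) : ℤ) - 1) * g + 1) = ((j : ℤ) + 1) * g + 1 := by
        push_cast
        rw [min_eq_right (by linarith)]
        ring
      rw [hmin'] at hstep
      have hsub : (j + 2 : ℕ) - 1 = j + 1 := by omega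
      rw [hsub] at hstep
      push_cast
      push_cast at ihh
      nlinarith
  -- Claim B
  have claimB : ∀ k : ℕ, β (m + 1 + k) ≥ β (m + 1) + k * d := by
    intro k
    induction k with
    | zero => simp
    | succ k ih =>
      have hstep := hβ (m + 1 + (k + 1)) (by omega)
      have hmin' : min (d : ℤ) ((((m + 1 + (k + 1) : ℕ) : ℤ) - 1) * g + 1) = (d : ℤ) := by
        rw [min_eq_left]
        push_cast
        rw [hdZ]
        have hεg : (ε : ℤ) + 1 ≤ g := by exact_mod_cast hε
        nlinarith [Int.natCast_nonneg g, Int.natCast_nonneg m, Int.natCast_nonneg k]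
      rw [hmin'] at hstep
      have hsub : (m + 1 + (k + 1) : ℕ) - 1 = m + 1 + k := by omega
      rw [hsub] at hstep
      push_cast
      push_cast at ih
      have hstep' : β (m + 1 + k + 1) - β (m + 1 + k) ≥ (d : ℤ) := hstep
      linarith
  obtain ⟨k, hk⟩ := hγ
  have hA := claimA m le_rfl
  have hB := claimB k
  have hchoose : ((m + 1).choose 2 : ℤ) * 2 = (m + 1) * m := by
    have : (m + 1).choose 2 * 2 = (m + 1) * m := by
      rw [Nat.choose_two_right]
      simp only [Nat.add_sub_cancel]
      rw [Nat.div_mul_cancel (by rw [Nat.mul_comm]; exact (Nat.even_mul_succ_self m).two_dvd)]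
    exact_mod_cast this
  rw [hdZ] at hk
  nlinarith [Int.natCast_nonneg k, Int.natCast_nonneg g]
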